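/- The boundary maps Ψ_q of the box resolution are morphisms of ℂ[z₁,…,z_m]-modules: Ψ_q ∘ T^{(q)}_{z_p} = T^{(q+1)}_{z_p} ∘ Ψ_q for every p ∈ {1,…,m}, where T^{(q)}_{z_p} denotes the direct sum over |I| = q of the compressed multiplication operators T^{𝔧_I,𝔟_I}_{z_p} on 𝒜_q. -/

import Mathlib

open scoped ENNReal

noncomputable section

/-- The box `ℬ^𝔟_𝔧 ⊆ ℕ^m`. -/
def Box (m : ℕ) (J : Finset (Fin m)) (b : Fin m → ℕ) : Set (Fin m → ℕ) :=
  {n | ∀ j ∈ J, n j ≤ b j}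

/-- The intersection box `ℬ^{𝔟_I}_{𝔧_I} = ⋂_{i ∈ I} ℬ^{𝔟_i}_{𝔧_i}`. -/
def BoxI (m k : ℕ) (Js : Fin k → Finset (Fin m)) (bs : Fin k → Fin m → ℕ)
    (I : Finset (Fin k)) : Set (Fin m → ℕ) :=
  {n | ∀ i ∈ I, n ∈ Box m (Js i) (bs i)}

/-- Index set for `𝒜_q = ⊕_{|I| = q} ℋ^{𝔟_I}_{𝔧_I}`. -/
def AIdx (m k : ℕ) (Js : Fin k → Finset (Fin m)) (bs : Fin k → Fin m → ℕ) (q : ℕ) :=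
  {p : Finset (Fin k) × (Fin m → ℕ) // p.1.card = q ∧ p.2 ∈ BoxI m k Js bs p.1}

/-- `𝒜_q` in the coordinates of its orthonormal basis of normalized monomials. -/
abbrev AMod (m k : ℕ) (Js : Fin k → Finset (Fin m)) (bs : Fin k → Fin m → ℕ) (q : ℕ) :=
  lp (fun _ : AIdx m k Js bs q => ℂ) (2 : ℝ≥0∞)

/-- `sign(I, e)`: the number of elements of `I` strictly smaller than `e`. -/
def signIns {k : ℕ} (I : Finset (Fin k)) (e : Fin k) : ℕ :=
  (I.filter (fun x => x < e)).card

/-- The Bergman weight `ω₀(𝔫) = (∏ᵢ nᵢ!)·m!/(|𝔫|+m)!`. -/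
def omega0 (m : ℕ) (n : Fin m → ℕ) : ℝ :=
  ((∏ i, (n i).factorial) * m.factorial : ℕ) / (((∑ i, n i) + m).factorial : ℕ)

/-- `𝔫 + e_p`. -/
def bump (m : ℕ) (p : Fin m) (n : Fin m → ℕ) : Fin m → ℕ :=
  Function.update n p (n p + 1)

lemma decEq_eq {α : Sort*} (i1 i2 : DecidableEq α) : i1 = i2 := by
  funext a b; exact Subsingleton.elim _ _

lemma lp_single_inst {ι : Type*} {E : ι → Type*} [∀ i, NormedAddCommGroup (E i)]
    (p : ℝ≥0∞) (i1 i2 : DecidableEq ι) (x : ι) (a : E x) :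
    @lp.single ι E _ i1 p x a = @lp.single ι E _ i2 p x a := by
  rw [decEq_eq i1 i2]

lemma boxI_of_bump_mem {m k : ℕ} {Js : Fin k → Finset (Fin m)} {bs : Fin k → Fin m → ℕ}
    {I : Finset (Fin k)} {p : Fin m} {n : Fin m → ℕ}
    (h : bump m p n ∈ BoxI m k Js bs I) : n ∈ BoxI m k Js bs I := by
  intro i hi j hj
  refine le_trans ?_ (h i hi j hj)
  unfold bump
  rcases eq_or_ne j p with rfl | hne
  · simp
  · rw [Function.update_of_ne hne]

lemma boxI_mono {m k : ℕ} {Js : Fin k → Finset (Fin m)} {bs : Fin k → Fin m → ℕ}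
    {I I' : Finset (Fin k)} (hII : I ⊆ I') {n : Fin m → ℕ}
    (h : n ∈ BoxI m k Js bs I') : n ∈ BoxI m k Js bs I :=
  fun i hi => h i (hII hi)

set_option synthInstance.maxHeartbeats 1000000 in
/-- Dense span of the standard singles in `ℓ²`. -/
lemma dense_span_single (ι : Type*) [DecidableEq ι] :
    Dense (↑(Submodule.span ℂ
      (Set.range fun x : ι => lp.single 2 x (1 : ℂ))) : Set (lp (fun _ : ι => ℂ) 2)) := by
  let b : HilbertBasis ι ℂ (lp (fun _ : ι => ℂ) 2) :=
    HilbertBasis.ofRepr (LinearIsometryEquiv.refl ℂ _)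
  have hb : ⇑b = fun x : ι => lp.single 2 x (1 : ℂ) := by
    funext x
    exact (b.repr_symm_single x).symm.trans rfl
  have hd := b.dense_span
  rw [hb] at hd
  exact Submodule.dense_iff_topologicalClosure_eq_top.mpr hd

set_option synthInstance.maxHeartbeats 1000000 in
set_option maxHeartbeats 2000000 in
open scoped Classical in
/-- the boundary map `Ψ_q` of the box resolution intertwines the compressed
multiplication operators: `Ψ_q ∘ T^{(q)}_{z_p} = T^{(q+1)}_{z_p} ∘ Ψ_q` for each
`p ∈ {1,…,m}`, i.e. `Ψ_q` is a morphism of `ℂ[z₁,…,z_m]`-modules.  Here the operators are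
characterized on the orthonormal basis: the compressed multiplication `T^{(r)}_{z_p}` sends
the basis vector at `(I, 𝔫)` to `√(ω₀(𝔫+e_p)/ω₀(𝔫))` times the one at `(I, 𝔫+e_p)` when
`𝔫+e_p ∈ ℬ^{𝔟_I}_{𝔧_I}` and to `0` otherwise, and `Ψ_q` sends the basis vector at `(I, 𝔫)`
to `Σ_{s ∉ I} (−1)^{sign(I,s)}` times the basis vector at `(I ∪ {s}, 𝔫)` (when
`𝔫 ∈ ℬ^{𝔟_{I∪{s}}}_{𝔧_{I∪{s}}}`, `0` otherwise). -/
theorem psi_module_morphism (m k q : ℕ) (Js : Fin k → Finset (Fin m))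
    (bs : Fin k → Fin m → ℕ)
    (Tq : Fin m → (AMod m k Js bs q →L[ℂ] AMod m k Js bs q))
    (Tq1 : Fin m → (AMod m k Js bs (q + 1) →L[ℂ] AMod m k Js bs (q + 1)))
    (Ψ : AMod m k Js bs q →L[ℂ] AMod m k Js bs (q + 1))
    (hTq : ∀ (p : Fin m) (x : AIdx m k Js bs q),
      Tq p (lp.single 2 x 1) =
        if h : bump m p x.1.2 ∈ BoxI m k Js bs x.1.1 then
          (Real.sqrt (omega0 m (bump m p x.1.2) / omega0 m x.1.2) : ℂ) •
            (lp.single 2 (⟨(x.1.1, bump m p x.1.2), ⟨x.2.1, h⟩⟩ : AIdx m k Js bs q) 1 :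
              AMod m k Js bs q)
        else 0)
    (hTq1 : ∀ (p : Fin m) (x : AIdx m k Js bs (q + 1)),
      Tq1 p (lp.single 2 x 1) =
        if h : bump m p x.1.2 ∈ BoxI m k Js bs x.1.1 then
          (Real.sqrt (omega0 m (bump m p x.1.2) / omega0 m x.1.2) : ℂ) •
            (lp.single 2 (⟨(x.1.1, bump m p x.1.2), ⟨x.2.1, h⟩⟩ : AIdx m k Js bs (q + 1)) 1 :
              AMod m k Js bs (q + 1))
        else 0)
    (hΨ : ∀ x : AIdx m k Js bs q,
      Ψ (lp.single 2 x 1) =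
        ∑ s ∈ Finset.univ \ x.1.1,
          ((-1 : ℂ) ^ signIns x.1.1 s) •
            ((if h : (insert s x.1.1).card = q + 1 ∧ x.1.2 ∈ BoxI m k Js bs (insert s x.1.1)
              then lp.single 2 (⟨(insert s x.1.1, x.1.2), h⟩ : AIdx m k Js bs (q + 1)) 1
              else 0) : AMod m k Js bs (q + 1))) :
    ∀ p : Fin m, Ψ ∘L Tq p = Tq1 p ∘L Ψ := by
  intro p
  refine ContinuousLinearMap.ext_on (dense_span_single (AIdx m k Js bs q)) ?_
  rintro _ ⟨x, rfl⟩
  simp only [ContinuousLinearMap.comp_apply]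
  rw [hTq p x, hΨ x, map_sum]
  by_cases h : bump m p x.1.2 ∈ BoxI m k Js bs x.1.1
  · rw [dif_pos h,
      lp_single_inst (E := fun _ : AIdx m k Js bs q => ℂ) 2 _
        (fun a b => Classical.propDecidable (a = b)) ⟨(x.1.1, bump m p x.1.2), x.2.1, h⟩ 1,
      map_smul, hΨ ⟨(x.1.1, bump m p x.1.2), x.2.1, h⟩, Finset.smul_sum]
    refine Finset.sum_congr rfl ?_
    intro s hs
    simp only [Finset.mem_sdiff, Finset.mem_univ, true_and] at hs
    rw [map_smul, smul_comm]
    congr 1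
    by_cases h2 : bump m p x.1.2 ∈ BoxI m k Js bs (insert s x.1.1)
    · have hn : x.1.2 ∈ BoxI m k Js bs (insert s x.1.1) := boxI_of_bump_mem h2
      have hc : (insert s x.1.1).card = q + 1 := by
        rw [Finset.card_insert_of_notMem hs, x.2.1]
      rw [dif_pos ⟨hc, h2⟩, dif_pos ⟨hc, hn⟩,
        lp_single_inst (E := fun _ : AIdx m k Js bs (q+1) => ℂ) 2 _
          (fun a b => Classical.propDecidable (a = b)) ⟨(insert s x.1.1, x.1.2), hc, hn⟩ 1,
        hTq1 p ⟨(insert s x.1.1, x.1.2), hc, hn⟩, dif_pos h2]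
    · rw [dif_neg (by tauto)]
      by_cases h1 : (insert s x.1.1).card = q + 1 ∧ x.1.2 ∈ BoxI m k Js bs (insert s x.1.1)
      · rw [dif_pos h1,
          lp_single_inst (E := fun _ : AIdx m k Js bs (q+1) => ℂ) 2 _
            (fun a b => Classical.propDecidable (a = b)) ⟨(insert s x.1.1, x.1.2), h1⟩ 1,
          hTq1 p ⟨(insert s x.1.1, x.1.2), h1⟩, dif_neg h2, smul_zero]
      · rw [dif_neg h1, map_zero, smul_zero]
  · rw [dif_neg h, map_zero]
    refine (Finset.sum_eq_zero ?_).symm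
    intro s hs
    by_cases h1 : (insert s x.1.1).card = q + 1 ∧ x.1.2 ∈ BoxI m k Js bs (insert s x.1.1)
    · rw [dif_pos h1, map_smul,
        lp_single_inst (E := fun _ : AIdx m k Js bs (q+1) => ℂ) 2 _
          (fun a b => Classical.propDecidable (a = b)) ⟨(insert s x.1.1, x.1.2), h1⟩ 1,
        hTq1 p ⟨(insert s x.1.1, x.1.2), h1⟩]
      have h2 : ¬ bump m p x.1.2 ∈ BoxI m k Js bs (insert s x.1.1) := fun h2 =>
        h (boxI_mono (Finset.subset_insert s x.1.1) h2)
      rw [dif_neg h2, smul_zero]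
    · rw [dif_neg h1, smul_zero, map_zero]
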